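/- The 6-vertex triangulation RP²₆ of the real projective plane (the quotient of the boundary of the icosahedron by the antipodal map) admits a discrete Morse matching with exactly 3 critical cells, one in each dimension 0, 1, 2, and this is optimal: no discrete Morse matching on RP²₆ has fewer than 3 critical cells. -/

import Mathlib

open Finset
set_option linter.unusedSectionVars false

variable {V : Type*} [DecidableEq V]


/-- A (finite abstract) simplicial complex, given by its finset of faces:
all faces are nonempty and the collection is closed under nonempty subsets. -/
def IsComplex (S : Finset (Finset V)) : Prop :=
  ∀ F ∈ S, F.Nonempty ∧ ∀ G ⊆ F, G.Nonempty → G ∈ S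

/-- `σ` is a free face of `S`: it is properly contained in exactly one face `τ`,
which is moreover a facet. -/
def IsFreePair (S : Finset (Finset V)) (σ τ : Finset V) : Prop :=
  σ ∈ S ∧ τ ∈ S ∧ σ ⊂ τ ∧ (∀ ρ ∈ S, σ ⊂ ρ → ρ = τ) ∧ ∀ ρ ∈ S, ¬ τ ⊂ ρ

/-- `Collapses S T`: `S` reduces to `T` by a finite sequence of elementary collapses,
each removing a free face together with the unique facet containing it. -/
inductive Collapses : Finset (Finset V) → Finset (Finset V) → Prop
  | refl (S : Finset (Finset V)) : Collapses S S
  | step {S T : Finset (Finset V)} (σ τ : Finset V) :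
      IsFreePair S σ τ → Collapses (S \ {σ, τ}) T → Collapses S T

/-- A complex is collapsible if it collapses to a single vertex. -/
def Collapsible (S : Finset (Finset V)) : Prop :=
  ∃ v : V, Collapses S {({v} : Finset V)}

/-- A discrete Morse matching: an acyclic partial matching on the Hasse diagram
of `S`, pairing faces whose dimensions differ by one. -/
structure MorseMatching (S : Finset (Finset V)) where
  M : Finset (Finset V × Finset V)
  mem_left : ∀ p ∈ M, p.1 ∈ S
  mem_right : ∀ p ∈ M, p.2 ∈ S
  cover : ∀ p ∈ M, p.1 ⊂ p.2 ∧ p.2.card = p.1.card + 1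
  matching : ∀ p ∈ M, ∀ q ∈ M, p ≠ q →
    p.1 ≠ q.1 ∧ p.2 ≠ q.2 ∧ p.1 ≠ q.2 ∧ p.2 ≠ q.1
  /-- The modified Hasse diagram (matched pairs pointing up, unmatched cover
  relations pointing down) has no directed cycle. -/
  acyclic : ∀ σ : Finset V, ¬ Relation.TransGen
      (fun x y => (x, y) ∈ M ∨
        ((y, x) ∉ M ∧ y ⊂ x ∧ x.card = y.card + 1 ∧ x ∈ S ∧ y ∈ S)) σ σ

/-- A face is critical for a matching if it is unmatched. -/
def MorseMatching.Critical {S : Finset (Finset V)} (mm : MorseMatching S)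
    (F : Finset V) : Prop :=
  F ∈ S ∧ ∀ p ∈ mm.M, p.1 ≠ F ∧ p.2 ≠ F

open scoped Classical in
/-- The finset of critical (unmatched) cells of a matching. -/
noncomputable def MorseMatching.criticalCells {S : Finset (Finset V)}
    (mm : MorseMatching S) : Finset (Finset V) :=
  S.filter fun F => ∀ p ∈ mm.M, p.1 ≠ F ∧ p.2 ≠ F

open scoped Classical in
/-- `c_i`: the number of critical `i`-dimensional cells. -/
noncomputable def MorseMatching.critCount {S : Finset (Finset V)}
    (mm : MorseMatching S) (i : ℕ) : ℕ :=
  (mm.criticalCells.filter fun F => F.card = i + 1).card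

/-- The ten facets of the 6-vertex triangulation of the real projective plane. -/
def RP26facets : Finset (Finset (Fin 6)) :=
  { {0, 1, 2}, {0, 1, 4}, {0, 2, 3}, {0, 3, 5}, {0, 4, 5},
    {1, 2, 5}, {1, 3, 4}, {1, 3, 5}, {2, 3, 4}, {2, 4, 5} }

/-- The 6-vertex triangulation `RP²₆` of the real projective plane. -/
def RP26 : Finset (Finset (Fin 6)) :=
  (RP26facets.biUnion fun F => F.powerset).filter fun F => F.Nonempty

section AuxStmt15

set_option maxRecDepth 10000
set_option maxHeartbeats 1000000

/-! ### Auxiliary material for `stmt15` -/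

def mmL : List (Finset (Fin 6) × Finset (Fin 6)) :=
  [({0, 1}, {0, 1, 4}), ({0, 2}, {0, 2, 3}), ({0, 3}, {0, 3, 5}),
   ({0, 4}, {0, 4, 5}), ({0}, {0, 5}), ({1, 2}, {1, 2, 5}),
   ({1, 4}, {1, 3, 4}), ({1, 3}, {1, 3, 5}), ({1}, {1, 5}),
   ({2, 3}, {2, 3, 4}), ({2, 4}, {2, 4, 5}), ({2}, {2, 5}),
   ({3}, {3, 5}), ({4}, {4, 5})]

def fstL : List (Finset (Fin 6)) :=
  [{0, 1}, {0, 2}, {0, 3}, {0, 4}, {0}, {1, 2}, {1, 4}, {1, 3}, {1},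
   {2, 3}, {2, 4}, {2}, {3}, {4}]

def sndL : List (Finset (Fin 6)) :=
  [{0, 1, 4}, {0, 2, 3}, {0, 3, 5}, {0, 4, 5}, {0, 5}, {1, 2, 5},
   {1, 3, 4}, {1, 3, 5}, {1, 5}, {2, 3, 4}, {2, 4, 5}, {2, 5}, {3, 5}, {4, 5}]

lemma hfst : mmL.map Prod.fst = fstL := rfl
lemma hsnd : mmL.map Prod.snd = sndL := rfl

lemma fstL_nodup : fstL.Nodup := by decide
lemma sndL_nodup : sndL.Nodup := by decide
lemma fstL_disj_sndL : ∀ x ∈ fstL, x ∉ sndL := by decide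

/-- The matched pairs of the explicit optimal Morse matching. -/
def mmM : Finset (Finset (Fin 6) × Finset (Fin 6)) :=
  ⟨(mmL : Multiset (Finset (Fin 6) × Finset (Fin 6))),
    ((hfst ▸ fstL_nodup : (mmL.map Prod.fst).Nodup).of_map Prod.fst : mmL.Nodup)⟩

lemma mem_mmM {p : Finset (Fin 6) × Finset (Fin 6)} : p ∈ mmM ↔ p ∈ mmL :=
  Finset.mem_mk.trans Multiset.mem_coe

lemma mmL_fst_inj : ∀ p ∈ mmL, ∀ q ∈ mmL, p.1 = q.1 → p = q := fun p hp q hq h =>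
  List.inj_on_of_nodup_map (hfst ▸ fstL_nodup) hp hq h

lemma mmL_snd_inj : ∀ p ∈ mmL, ∀ q ∈ mmL, p.2 = q.2 → p = q := fun p hp q hq h =>
  List.inj_on_of_nodup_map (hsnd ▸ sndL_nodup) hp hq h

lemma mmL_fst_ne_snd : ∀ p ∈ mmL, ∀ q ∈ mmL, p.1 ≠ q.2 := by
  intro p hp q hq h
  have h1 : p.1 ∈ fstL := hfst ▸ List.mem_map_of_mem (f := Prod.fst) hp
  have h2 : q.2 ∈ sndL := hsnd ▸ List.mem_map_of_mem (f := Prod.snd) hq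
  exact fstL_disj_sndL p.1 h1 (h.symm ▸ h2)

lemma mmM_matching : ∀ p ∈ mmM, ∀ q ∈ mmM, p ≠ q →
    p.1 ≠ q.1 ∧ p.2 ≠ q.2 ∧ p.1 ≠ q.2 ∧ p.2 ≠ q.1 := by
  intro p hp q hq hne
  rw [mem_mmM] at hp hq
  exact ⟨fun h => hne (mmL_fst_inj p hp q hq h),
    fun h => hne (mmL_snd_inj p hp q hq h),
    mmL_fst_ne_snd p hp q hq,
    fun h => mmL_fst_ne_snd q hq p hp h.symm⟩

def rk : Finset (Fin 6) → ℕ := fun F =>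
  if F = {0} then 25 else if F = {1} then 17 else if F = {2} then 11 else
  if F = {3} then 7 else if F = {4} then 5 else if F = {5} then 2 else
  if F = {0, 1} then 33 else if F = {0, 2} then 31 else if F = {0, 3} then 29 else
  if F = {0, 4} then 27 else if F = {0, 5} then 24 else if F = {1, 2} then 23 else
  if F = {1, 3} then 19 else if F = {1, 4} then 21 else if F = {1, 5} then 16 else
  if F = {2, 3} then 15 else if F = {2, 4} then 13 else if F = {2, 5} then 10 else
  if F = {3, 4} then 8 else if F = {3, 5} then 6 else if F = {4, 5} then 4 else
  if F = {0, 1, 2} then 34 else if F = {0, 1, 4} then 32 else if F = {0, 2, 3} then 30 else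
  if F = {0, 3, 5} then 28 else if F = {0, 4, 5} then 26 else if F = {1, 2, 5} then 22 else
  if F = {1, 3, 4} then 20 else if F = {1, 3, 5} then 18 else if F = {2, 3, 4} then 14 else
  if F = {2, 4, 5} then 12 else 0

lemma mmM_facts : ∀ p ∈ mmM, p.1 ∈ RP26 ∧ p.2 ∈ RP26 ∧ p.1 ⊂ p.2 ∧
    p.2.card = p.1.card + 1 ∧ rk p.2 < rk p.1 := by
  intro p hp
  rw [mem_mmM] at hp
  fin_cases hp <;> exact ⟨by decide, by decide, by decide, by decide, by decide⟩

lemma rk_down : ∀ x ∈ RP26, ∀ y ∈ RP26, y ⊂ x → x.card = y.card + 1 →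
    (y, x) ∉ mmM → rk y < rk x := by decide

/-- The explicit optimal Morse matching on `RP26`. -/
def RPmm : MorseMatching RP26 where
  M := mmM
  mem_left := fun p hp => (mmM_facts p hp).1
  mem_right := fun p hp => (mmM_facts p hp).2.1
  cover := fun p hp => ⟨(mmM_facts p hp).2.2.1, (mmM_facts p hp).2.2.2.1⟩
  matching := mmM_matching
  acyclic := by
    intro σ hcyc
    have key : ∀ x y : Finset (Fin 6),
        ((x, y) ∈ mmM ∨ ((y, x) ∉ mmM ∧ y ⊂ x ∧ x.card = y.card + 1 ∧
          x ∈ RP26 ∧ y ∈ RP26)) → rk y < rk x := by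
      rintro x y (h | ⟨h1, h2, h3, h4, h5⟩)
      · exact (mmM_facts (x, y) h).2.2.2.2
      · exact rk_down x h4 y h5 h2 h3 h1
    have main : ∀ a b : Finset (Fin 6), Relation.TransGen
        (fun x y => (x, y) ∈ mmM ∨ ((y, x) ∉ mmM ∧ y ⊂ x ∧
          x.card = y.card + 1 ∧ x ∈ RP26 ∧ y ∈ RP26)) a b → rk b < rk a := by
      intro a b h
      induction h with
      | single h => exact key _ _ h
      | tail _ h ih => exact (key _ _ h).trans ih
    exact lt_irrefl _ (main σ σ hcyc)

lemma hcrit1 : ∀ F ∈ RP26, F ∉ fstL → F ∉ sndL →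
    F ∈ ({ {5}, {3, 4}, {0, 1, 2} } : Finset (Finset (Fin 6))) := by decide

lemma hcrit2 : ∀ F ∈ ({ {5}, {3, 4}, {0, 1, 2} } : Finset (Finset (Fin 6))),
    F ∈ RP26 ∧ F ∉ fstL ∧ F ∉ sndL := by decide

lemma crit_mem : ∀ F : Finset (Fin 6),
    (F ∈ RP26 ∧ ∀ p ∈ mmM, p.1 ≠ F ∧ p.2 ≠ F) ↔
      F ∈ ({ {5}, {3, 4}, {0, 1, 2} } : Finset (Finset (Fin 6))) := by
  intro F
  constructor
  · rintro ⟨hF, h⟩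
    refine hcrit1 F hF ?_ ?_
    · intro hmem
      rw [← hfst] at hmem
      obtain ⟨p, hp, he⟩ := List.mem_map.mp hmem
      exact (h p (mem_mmM.mpr hp)).1 he
    · intro hmem
      rw [← hsnd] at hmem
      obtain ⟨p, hp, he⟩ := List.mem_map.mp hmem
      exact (h p (mem_mmM.mpr hp)).2 he
  · intro hF
    obtain ⟨h1, h2, h3⟩ := hcrit2 F hF
    refine ⟨h1, fun p hp => ⟨fun he => ?_, fun he => ?_⟩⟩
    · exact h2 (hfst ▸ (he ▸ List.mem_map_of_mem (f := Prod.fst) (mem_mmM.mp hp)))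
    · exact h3 (hsnd ▸ (he ▸ List.mem_map_of_mem (f := Prod.snd) (mem_mmM.mp hp)))

lemma RPmm_crit : RPmm.criticalCells =
    ({ {5}, {3, 4}, {0, 1, 2} } : Finset (Finset (Fin 6))) := by
  ext F
  unfold MorseMatching.criticalCells
  rw [Finset.filter_congr_decidable, Finset.mem_filter]
  exact crit_mem F

lemma RPmm_counts : RPmm.critCount 0 = 1 ∧ RPmm.critCount 1 = 1 ∧ RPmm.critCount 2 = 1 := by
  unfold MorseMatching.critCount
  rw [RPmm_crit]
  refine ⟨?_, ?_, ?_⟩ <;> · rw [Finset.filter_congr_decidable]; decide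

/-- On a finite vertex set, a relation with no "sinks" inside `s` has a cycle. -/
lemma exists_transGen_cycle {α : Type*} (s : Finset α) (hs : s.Nonempty)
    (R : α → α → Prop) (h : ∀ a ∈ s, ∃ b ∈ s, R a b) :
    ∃ a, Relation.TransGen R a a := by
  obtain ⟨a0, h0⟩ := hs
  choose f hf hR using h
  let T := {x : α // x ∈ s}
  let F : T → T := fun x => ⟨f x.1 x.2, hf x.1 x.2⟩
  have key : ∀ (n : ℕ) (x : T), 0 < n → Relation.TransGen R x.1 (F^[n] x).1 := by
    intro n
    induction n with
    | zero => intro x hx; omega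
    | succ n ih =>
      intro x _
      rcases Nat.eq_zero_or_pos n with hn | hn
      · subst hn
        exact Relation.TransGen.single (hR x.1 x.2)
      · have h1 : Relation.TransGen R x.1 (F x).1 :=
          Relation.TransGen.single (hR x.1 x.2)
        have h2 := ih (F x) hn
        rw [Function.iterate_succ_apply]
        exact h1.trans h2
  have hfin : Finite T := inferInstance
  obtain ⟨i, j, hij, heq⟩ :=
    Finite.exists_ne_map_eq_of_infinite (fun n : ℕ => F^[n] (⟨a0, h0⟩ : T))
  have main : ∀ i j : ℕ, i < j → F^[i] (⟨a0, h0⟩ : T) = F^[j] (⟨a0, h0⟩ : T) →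
      ∃ a, Relation.TransGen R a a := by
    intro i j hlt he
    refine ⟨(F^[i] (⟨a0, h0⟩ : T)).1, ?_⟩
    have h1 : Relation.TransGen R (F^[i] (⟨a0, h0⟩ : T)).1
        ((F^[j - i]) (F^[i] (⟨a0, h0⟩ : T))).1 := key (j - i) _ (by omega)
    rw [← Function.iterate_add_apply, Nat.sub_add_cancel hlt.le, ← he] at h1
    exact h1
  rcases lt_or_gt_of_ne hij with hlt | hlt
  · exact main i j hlt heq
  · exact main j i hlt heq.symm

lemma RP26_card : RP26.card = 31 := by decide
lemma RP26_dims : ∀ F ∈ RP26, F.card = 1 ∨ F.card = 2 ∨ F.card = 3 := by decide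
lemma RP26_verts : (RP26.filter fun F => F.card = 1).card = 6 := by decide
lemma RP26_edges : (RP26.filter fun F => F.card = 2).card = 15 := by decide
lemma RP26_tris : (RP26.filter fun F => F.card = 3).card = 10 := by decide
lemma RP26_singleton : ∀ u : Fin 6, ({u} : Finset (Fin 6)) ∈ RP26 := by decide
lemma RP26_other_tri : ∀ t ∈ RP26, ∀ e ∈ RP26, t.card = 3 → e.card = 2 → e ⊆ t →
    ∃ t' ∈ RP26, t'.card = 3 ∧ e ⊆ t' ∧ t' ≠ t := by decide

lemma lower_bound (mm : MorseMatching RP26) : 3 ≤ mm.criticalCells.card := by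
  classical
  by_contra hlt
  push_neg at hlt
  set M := mm.M with hMdef
  set rel : Finset (Fin 6) → Finset (Fin 6) → Prop := fun x y =>
    (x, y) ∈ M ∨ ((y, x) ∉ M ∧ y ⊂ x ∧ x.card = y.card + 1 ∧
      x ∈ RP26 ∧ y ∈ RP26) with hrel
  have acyc : ∀ σ, ¬ Relation.TransGen rel σ σ := mm.acyclic
  -- the matched cells
  set matched : Finset (Finset (Fin 6)) := M.image Prod.fst ∪ M.image Prod.snd
    with hmatched
  have hinjfst : Set.InjOn Prod.fst (M : Set (Finset (Fin 6) × Finset (Fin 6))) := by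
    intro p hp q hq h
    by_contra hne
    exact (mm.matching p hp q hq hne).1 h
  have hinjsnd : Set.InjOn Prod.snd (M : Set (Finset (Fin 6) × Finset (Fin 6))) := by
    intro p hp q hq h
    by_contra hne
    exact (mm.matching p hp q hq hne).2.1 h
  have hdisj : Disjoint (M.image Prod.fst) (M.image Prod.snd) := by
    rw [Finset.disjoint_left]
    rintro F hF1 hF2
    obtain ⟨p, hp, rfl⟩ := Finset.mem_image.mp hF1
    obtain ⟨q, hq, hq2⟩ := Finset.mem_image.mp hF2
    by_cases hpq : p = q
    · subst hpq
      have hc := (mm.cover p hp).2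
      rw [hq2] at hc
      omega
    · exact (mm.matching q hq p hp (Ne.symm hpq)).2.2.2 hq2
  have hcard_matched : matched.card = 2 * M.card := by
    rw [hmatched, Finset.card_union_of_disjoint hdisj,
      Finset.card_image_of_injOn hinjfst, Finset.card_image_of_injOn hinjsnd]
    ring
  have hsub : matched ⊆ RP26 := by
    intro F hF
    rcases Finset.mem_union.mp hF with hm | hm
    · obtain ⟨p, hp, rfl⟩ := Finset.mem_image.mp hm
      exact mm.mem_left p hp
    · obtain ⟨p, hp, rfl⟩ := Finset.mem_image.mp hm
      exact mm.mem_right p hp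
  have hcrit : mm.criticalCells = RP26 \ matched := by
    ext F
    unfold MorseMatching.criticalCells
    rw [Finset.filter_congr_decidable, Finset.mem_filter, Finset.mem_sdiff]
    constructor
    · rintro ⟨hF, h⟩
      refine ⟨hF, fun hmem => ?_⟩
      rcases Finset.mem_union.mp hmem with hm | hm
      · obtain ⟨p, hp, he⟩ := Finset.mem_image.mp hm
        exact (h p hp).1 he
      · obtain ⟨p, hp, he⟩ := Finset.mem_image.mp hm
        exact (h p hp).2 he
    · rintro ⟨hF, h⟩
      refine ⟨hF, fun p hp => ⟨fun he => ?_, fun he => ?_⟩⟩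
      · exact h (Finset.mem_union_left _ (Finset.mem_image.mpr ⟨p, hp, he⟩))
      · exact h (Finset.mem_union_right _ (Finset.mem_image.mpr ⟨p, hp, he⟩))
  have hcritcard : mm.criticalCells.card = 31 - 2 * M.card := by
    rw [hcrit, Finset.card_sdiff_of_subset hsub, hcard_matched, RP26_card]
  -- each pair determines a distinct edge, so |M| ≤ 15
  have hpairdims : ∀ p ∈ M, (p.1.card = 1 ∧ p.2.card = 2) ∨
      (p.1.card = 2 ∧ p.2.card = 3) := by
    intro p hp
    have h1 := RP26_dims p.1 (mm.mem_left p hp)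
    have h2 := RP26_dims p.2 (mm.mem_right p hp)
    have h3 := (mm.cover p hp).2
    omega
  have hM15 : M.card ≤ 15 := by
    set f : Finset (Fin 6) × Finset (Fin 6) → Finset (Fin 6) :=
      fun p => if p.1.card = 1 then p.2 else p.1 with hf
    have him : M.image f ⊆ RP26.filter fun F => F.card = 2 := by
      intro F hF
      obtain ⟨p, hp, rfl⟩ := Finset.mem_image.mp hF
      rcases hpairdims p hp with ⟨c1, c2⟩ | ⟨c1, c2⟩
      · rw [Finset.mem_filter, hf]
        simp only [c1, if_pos rfl]
        exact ⟨mm.mem_right p hp, c2⟩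
      · rw [Finset.mem_filter, hf]
        simp only [c1]
        norm_num
        exact ⟨mm.mem_left p hp, c1⟩
    have hinj : Set.InjOn f (M : Set (Finset (Fin 6) × Finset (Fin 6))) := by
      intro p hp q hq h
      by_contra hne
      obtain ⟨n1, n2, n3, n4⟩ := mm.matching p hp q hq hne
      rcases hpairdims p hp with ⟨c1, _⟩ | ⟨c1, _⟩ <;>
        rcases hpairdims q hq with ⟨d1, _⟩ | ⟨d1, _⟩
      · rw [hf] at h
        simp only [if_pos c1, if_pos d1] at h
        exact n2 h
      · rw [hf] at h
        simp only [if_pos c1, if_neg (by omega : ¬ q.1.card = 1)] at h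
        exact n4 h
      · rw [hf] at h
        simp only [if_neg (by omega : ¬ p.1.card = 1), if_pos d1] at h
        exact n3 h
      · rw [hf] at h
        simp only [if_neg (by omega : ¬ p.1.card = 1),
          if_neg (by omega : ¬ q.1.card = 1)] at h
        exact n1 h
    calc M.card = (M.image f).card := (Finset.card_image_of_injOn hinj).symm
      _ ≤ 15 := le_trans (Finset.card_le_card him) (le_of_eq RP26_edges)
  have hM : M.card = 15 := by omega
  -- split into vertex-edge and edge-triangle pairs
  set A := M.filter (fun p => p.1.card = 1) with hA
  set B := M.filter (fun p => ¬ p.1.card = 1) with hB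
  have hAB : A.card + B.card = 15 := by
    rw [hA, hB, Finset.card_filter_add_card_filter_not]
    exact hM
  have hAcard : A.card ≤ 6 := by
    have him : A.image Prod.fst ⊆ RP26.filter fun F => F.card = 1 := by
      intro F hF
      obtain ⟨p, hp, rfl⟩ := Finset.mem_image.mp hF
      obtain ⟨hpM, hp1⟩ := Finset.mem_filter.mp hp
      exact Finset.mem_filter.mpr ⟨mm.mem_left p hpM, hp1⟩
    have hinj : Set.InjOn Prod.fst (A : Set (Finset (Fin 6) × Finset (Fin 6))) := fun p hp q hq h =>
      hinjfst (Finset.filter_subset _ _ hp) (Finset.filter_subset _ _ hq) h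
    calc A.card = (A.image Prod.fst).card := (Finset.card_image_of_injOn hinj).symm
      _ ≤ 6 := le_trans (Finset.card_le_card him) (le_of_eq RP26_verts)
  have hBcard : B.card ≤ 10 := by
    have him : B.image Prod.snd ⊆ RP26.filter fun F => F.card = 3 := by
      intro F hF
      obtain ⟨p, hp, rfl⟩ := Finset.mem_image.mp hF
      obtain ⟨hpM, hp1⟩ := Finset.mem_filter.mp hp
      rcases hpairdims p hpM with ⟨c1, c2⟩ | ⟨c1, c2⟩
      · exact absurd c1 hp1
      · exact Finset.mem_filter.mpr ⟨mm.mem_right p hpM, c2⟩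
    have hinj : Set.InjOn Prod.snd (B : Set (Finset (Fin 6) × Finset (Fin 6))) := fun p hp q hq h =>
      hinjsnd (Finset.filter_subset _ _ hp) (Finset.filter_subset _ _ hq) h
    calc B.card = (B.image Prod.snd).card := (Finset.card_image_of_injOn hinj).symm
      _ ≤ 10 := le_trans (Finset.card_le_card him) (le_of_eq RP26_tris)
  have hcases : A.card = 6 ∨ B.card = 10 := by omega
  rcases hcases with hA6 | hB10
  · -- all vertices are matched: find a cycle through vertices
    have himeq : A.image Prod.fst = RP26.filter fun F => F.card = 1 := by
      apply Finset.eq_of_subset_of_card_le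
      · intro F hF
        obtain ⟨p, hp, rfl⟩ := Finset.mem_image.mp hF
        obtain ⟨hpM, hp1⟩ := Finset.mem_filter.mp hp
        exact Finset.mem_filter.mpr ⟨mm.mem_left p hpM, hp1⟩
      · rw [RP26_verts]
        have hinj : Set.InjOn Prod.fst (A : Set (Finset (Fin 6) × Finset (Fin 6))) := fun p hp q hq h =>
          hinjfst (Finset.filter_subset _ _ hp) (Finset.filter_subset _ _ hq) h
        rw [Finset.card_image_of_injOn hinj, hA6]
    have step : ∀ F ∈ RP26.filter (fun F => F.card = 1),
        ∃ G ∈ RP26.filter (fun F => F.card = 1), Relation.TransGen rel F G := by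
      intro F hF
      have hF' := hF
      rw [← himeq] at hF'
      obtain ⟨p, hp, hpF⟩ := Finset.mem_image.mp hF'
      obtain ⟨hpM, hp1⟩ := Finset.mem_filter.mp hp
      obtain ⟨hFS, hF1⟩ := Finset.mem_filter.mp hF
      obtain ⟨v, hv⟩ := Finset.card_eq_one.mp hF1
      have he2 : p.2.card = 2 := by
        have := (mm.cover p hpM).2; omega
      obtain ⟨x, y, hxy, hexy⟩ := Finset.card_eq_two.mp he2
      have hvF : v ∈ F := by rw [hv]; exact Finset.mem_singleton_self v
      have hvp2 : v ∈ p.2 := subset_of_ssubset (mm.cover p hpM).1 (hpF ▸ hvF)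
      -- w : the other endpoint
      have hmain : ∀ w : Fin 6, w ≠ v → w ∈ p.2 →
          ∃ G ∈ RP26.filter (fun F => F.card = 1), Relation.TransGen rel F G := by
        intro w hwv hwp2
        refine ⟨{w}, Finset.mem_filter.mpr ⟨RP26_singleton w, Finset.card_singleton w⟩, ?_⟩
        have s1 : rel F p.2 := by
          simp only [hrel]
          left
          have : (F, p.2) = p := by rw [← hpF]
          rw [this]
          exact hpM
        have s2 : rel p.2 ({w} : Finset (Fin 6)) := by
          simp only [hrel]
          right
          refine ⟨?_, ?_, ?_, mm.mem_right p hpM, RP26_singleton w⟩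
          · intro hq
            have hne : p ≠ ({w}, p.2) := by
              intro h
              apply hwv
              have h1 : p.1 = {w} := by rw [h]
              have h2 : ({v} : Finset (Fin 6)) = {w} := (hpF.trans hv).symm.trans h1
              exact (Finset.singleton_injective h2).symm
            exact (mm.matching p hpM ({w}, p.2) hq hne).2.1 rfl
          · refine _root_.ssubset_iff_subset_ne.mpr ⟨Finset.singleton_subset_iff.mpr hwp2, ?_⟩
            intro h
            rw [← h] at he2
            simp at he2
          · rw [he2, Finset.card_singleton]
        exact Relation.TransGen.head s1 (Relation.TransGen.single s2)
      have : v = x ∨ v = y := by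
        rw [hexy] at hvp2
        simpa using hvp2
      rcases this with rfl | rfl
      · exact hmain y (fun h => hxy h.symm) (by rw [hexy]; simp)
      · exact hmain x hxy (by rw [hexy]; simp)
    obtain ⟨a, ha⟩ := exists_transGen_cycle (RP26.filter fun F => F.card = 1)
      (Finset.card_pos.mp (by rw [RP26_verts]; omega))
      (fun F G => Relation.TransGen rel F G) step
    rw [Relation.transGen_idem] at ha
    exact acyc a ha
  · -- all triangles are matched: find a cycle through triangles
    have himeq : B.image Prod.snd = RP26.filter fun F => F.card = 3 := by
      apply Finset.eq_of_subset_of_card_le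
      · intro F hF
        obtain ⟨p, hp, rfl⟩ := Finset.mem_image.mp hF
        obtain ⟨hpM, hp1⟩ := Finset.mem_filter.mp hp
        rcases hpairdims p hpM with ⟨c1, c2⟩ | ⟨c1, c2⟩
        · exact absurd c1 hp1
        · exact Finset.mem_filter.mpr ⟨mm.mem_right p hpM, c2⟩
      · rw [RP26_tris]
        have hinj : Set.InjOn Prod.snd (B : Set (Finset (Fin 6) × Finset (Fin 6))) := fun p hp q hq h =>
          hinjsnd (Finset.filter_subset _ _ hp) (Finset.filter_subset _ _ hq) h
        rw [Finset.card_image_of_injOn hinj, hB10]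
    have step : ∀ t ∈ RP26.filter (fun F => F.card = 3),
        ∃ t' ∈ RP26.filter (fun F => F.card = 3), Relation.TransGen rel t' t := by
      intro t ht
      have ht' := ht
      rw [← himeq] at ht'
      obtain ⟨p, hp, hpt⟩ := Finset.mem_image.mp ht'
      obtain ⟨hpM, hp1⟩ := Finset.mem_filter.mp hp
      obtain ⟨htS, ht3⟩ := Finset.mem_filter.mp ht
      have hdims : p.1.card = 2 ∧ p.2.card = 3 := by
        rcases hpairdims p hpM with ⟨c1, c2⟩ | h
        · exact absurd c1 hp1
        · exact h
      have hsub1 : p.1 ⊆ t := hpt ▸ subset_of_ssubset (mm.cover p hpM).1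
      obtain ⟨t', ht'S, ht'3, hsubt', hne⟩ := RP26_other_tri t htS p.1
        (mm.mem_left p hpM) ht3 hdims.1 hsub1
      refine ⟨t', Finset.mem_filter.mpr ⟨ht'S, ht'3⟩, ?_⟩
      have s1 : rel t' p.1 := by
        simp only [hrel]
        right
        refine ⟨?_, ?_, ?_, ht'S, mm.mem_left p hpM⟩
        · intro hq
          have hnepq : p ≠ (p.1, t') := by
            intro h
            apply hne
            have : p.2 = t' := by rw [h]
            rw [← this, hpt]
          exact (mm.matching p hpM (p.1, t') hq hnepq).1 rfl
        · refine _root_.ssubset_iff_subset_ne.mpr ⟨hsubt', ?_⟩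
          intro h
          rw [h] at hdims
          omega
        · omega
      have s2 : rel p.1 t := by
        simp only [hrel]
        left
        have : (p.1, t) = p := by rw [← hpt]
        rw [this]
        exact hpM
      exact Relation.TransGen.head s1 (Relation.TransGen.single s2)
    obtain ⟨a, ha⟩ := exists_transGen_cycle (RP26.filter fun F => F.card = 3)
      (Finset.card_pos.mp (by rw [RP26_tris]; omega))
      (fun a b => Relation.TransGen rel b a) step
    have ha' := Relation.transGen_swap.mp ha
    rw [Relation.transGen_idem] at ha'
    exact acyc a ha'


end AuxStmt15

/-- `RP²₆` admits a discrete Morse matching with exactly three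
critical cells, one in each dimension 0, 1, 2, and no discrete Morse matching
on `RP²₆` has fewer than 3 critical cells. -/
theorem stmt15 :
    (∃ mm : MorseMatching RP26, mm.critCount 0 = 1 ∧ mm.critCount 1 = 1 ∧
      mm.critCount 2 = 1 ∧ mm.criticalCells.card = 3) ∧
    (∀ mm : MorseMatching RP26, 3 ≤ mm.criticalCells.card) := by
  refine ⟨⟨RPmm, RPmm_counts.1, RPmm_counts.2.1, RPmm_counts.2.2, ?_⟩, lower_bound⟩
  rw [RPmm_crit]
  decide
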